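/- Let m ≥ 2 and let n_1, …, n_m be m distinct positive integers. Then the vectors v_i = (f_1(n_i), f_2(n_i), …, f_m(n_i)) ∈ ℚ^m, for i = 1,…,m, are linearly independent over ℚ. -/

import Mathlib

open Polynomial Matrix

lemma entry_eq (a j : ℕ) (ha : 1 ≤ a) :
    ((a + j + 1 - 2).choose (j + 1 - 1) : ℚ) =
      (ascPochhammer ℚ j).eval (a : ℚ) / (j.factorial : ℚ) := by
  have h1 : a + j + 1 - 2 = a + j - 1 := by omega
  have h2 : j + 1 - 1 = j := by omega
  rcases Nat.eq_zero_or_pos j with hj | hj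
  · subst hj; simp
  · rw [h1, h2, Nat.cast_choose_eq_ascPochhammer_div]
    congr 3
    omega

/-- The vectors `v_i = (f_1(n_i), …, f_m(n_i))` are linearly independent over `ℚ`. -/
theorem f_vectors_linearIndependent (m : ℕ) (hm : 2 ≤ m) (n : Fin m → ℕ)
    (hpos : ∀ i, 1 ≤ n i) (hinj : Function.Injective n) :
    LinearIndependent ℚ (fun i : Fin m => fun j : Fin m =>
      (Nat.choose (n i + (j : ℕ) + 1 - 2) ((j : ℕ) + 1 - 1) : ℚ)) := by
  set A : Matrix (Fin m) (Fin m) ℚ := Matrix.of (fun i j =>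
      (Nat.choose (n i + (j : ℕ) + 1 - 2) ((j : ℕ) + 1 - 1) : ℚ)) with hA
  have key : LinearIndependent ℚ (fun i => A i) := by
    rw [show (fun i => A i) = A.row from rfl, Matrix.linearIndependent_rows_iff_isUnit, Matrix.isUnit_iff_isUnit_det,
      isUnit_iff_ne_zero]
    have hAeq : A = Matrix.of (fun i j : Fin m =>
        ((ascPochhammer ℚ (j : ℕ)).eval ((n i : ℚ)))) *
        Matrix.diagonal (fun j : Fin m => ((j : ℕ).factorial : ℚ)⁻¹) := by
      ext i j
      rw [Matrix.mul_diagonal]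
      simp only [hA, Matrix.of_apply]
      rw [entry_eq _ _ (hpos i), div_eq_mul_inv]
    rw [hAeq, Matrix.det_mul, Matrix.det_diagonal]
    have hv : ((Matrix.vandermonde (fun i => ((n i : ℚ)))).det ≠ 0) := by
      rw [Matrix.det_vandermonde_ne_zero_iff]
      intro a b hab
      exact hinj (Nat.cast_injective hab)
    rw [← Matrix.det_eval_matrixOfPolynomials_eq_det_vandermonde
      (fun i => ((n i : ℚ))) (fun j => ascPochhammer ℚ (j : ℕ))
      (fun j => ascPochhammer_natDegree (S := ℚ) (j:ℕ)) (fun j => monic_ascPochhammer _ _)]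
    exact mul_ne_zero hv (Finset.prod_ne_zero_iff.mpr fun j _ =>
      inv_ne_zero (by exact_mod_cast (Nat.factorial_pos _).ne'))
  exact key
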